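/- In an integral domain R, the following are equivalent: (1) R is a Prüfer domain; (2) for all nonzero ideals I, J, K of R: I + (J ∩ K) = (I + J) ∩ (I + K); (3) for all nonzero ideals I, J, K of R: I ∩ (J + K) = (I ∩ J) + (I ∩ K). -/

import Mathlib

/-- A Prüfer domain: every nonzero finitely generated ideal is invertible. -/
def IsPruferDomain (R : Type*) [CommRing R] [IsDomain R] : Prop :=
  ∀ I : Ideal R, I ≠ ⊥ → I.FG →
    IsUnit (I : FractionalIdeal (nonZeroDivisors R) (FractionRing R))


section PruferAux

variable {R : Type*} [CommRing R] [IsDomain R]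
lemma inf_ne_bot' {I J : Ideal R} (hI : I ≠ ⊥) (hJ : J ≠ ⊥) : I ⊓ J ≠ ⊥ := by
  rw [Submodule.ne_bot_iff] at hI hJ ⊢
  obtain ⟨x, hxI, hx⟩ := hI
  obtain ⟨y, hyJ, hy⟩ := hJ
  exact ⟨x * y, ⟨I.mul_mem_right y hxI, J.mul_mem_left x hyJ⟩, mul_ne_zero hx hy⟩

lemma unit_singleton (a : R) (ha : a ≠ 0) :
    IsUnit ((Ideal.span {a} : Ideal R) : FractionalIdeal (nonZeroDivisors R) (FractionRing R)) := by
  rw [FractionalIdeal.coeIdeal_span_singleton]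
  have h0 : algebraMap R (FractionRing R) a ≠ 0 := by
    simpa using (map_ne_zero_iff _ (IsFractionRing.injective R (FractionRing R))).2 ha
  exact IsUnit.of_mul_eq_one (FractionalIdeal.spanSingleton _ (algebraMap R (FractionRing R) a)⁻¹)
    (by rw [FractionalIdeal.spanSingleton_mul_spanSingleton, mul_inv_cancel₀ h0,
      FractionalIdeal.spanSingleton_one])
lemma prufer_char (hP : IsPruferDomain R) (j k : R) :
    ∃ r s t u : R, r + u = 1 ∧ r * k = s * j ∧ u * j = t * k := by
  by_cases hj : j = 0
  · exact ⟨0, 0, 0, 1, by ring, by simp [hj], by simp [hj]⟩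
  by_cases hk : k = 0
  · exact ⟨1, 0, 0, 0, by ring, by simp [hk], by simp [hk]⟩
  set K := FractionRing R
  set f := algebraMap R K with hf
  set I : Ideal R := Ideal.span {j, k} with hIdef
  have hIbot : I ≠ ⊥ := by
    intro h
    have : j ∈ (⊥ : Ideal R) := h ▸ Ideal.subset_span (by simp)
    exact hj (by simpa using this)
  have hIfg : I.FG := Submodule.fg_span ((Set.finite_singleton k).insert j)
  obtain ⟨v, hv⟩ := hP I hIbot hIfg
  set B : Submodule R K := (((v⁻¹ : (FractionalIdeal (nonZeroDivisors R) K)ˣ) : FractionalIdeal (nonZeroDivisors R) K) : Submodule R K) with hB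
  have hmul : (I : FractionalIdeal (nonZeroDivisors R) K) * ((v⁻¹ : _ˣ) : FractionalIdeal (nonZeroDivisors R) K) = 1 := by
    rw [← hv]; exact_mod_cast v.mul_inv
  have h1 : (1 : K) ∈ ((I : FractionalIdeal (nonZeroDivisors R) K) : Submodule R K) * B := by
    rw [← FractionalIdeal.coe_mul, hmul]
    simp
  have hex : ∃ P Q : K, P ∈ B ∧ Q ∈ B ∧ f j * P + f k * Q = 1 := by
    refine Submodule.mul_induction_on h1 ?_ ?_
    · intro m hm n hn
      rw [FractionalIdeal.mem_coe, FractionalIdeal.mem_coeIdeal] at hm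
      obtain ⟨x, hx, rfl⟩ := hm
      obtain ⟨a, b, hab⟩ := Ideal.mem_span_pair.mp hx
      refine ⟨f a * n, f b * n, ?_, ?_, ?_⟩
      · rw [← Algebra.smul_def]; exact B.smul_mem a hn
      · rw [← Algebra.smul_def]; exact B.smul_mem b hn
      · rw [← hab]; push_cast [map_add, map_mul]; ring
    · rintro x y ⟨P1, Q1, hP1, hQ1, h1⟩ ⟨P2, Q2, hP2, hQ2, h2⟩
      exact ⟨P1 + P2, Q1 + Q2, B.add_mem hP1 hP2, B.add_mem hQ1 hQ2, by rw [← h1, ← h2]; ring⟩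
  obtain ⟨P, Q, hPB, hQB, hPQ⟩ := hex
  have hjI : f j ∈ ((I : FractionalIdeal (nonZeroDivisors R) K) : Submodule R K) :=
    FractionalIdeal.mem_coe.mpr (FractionalIdeal.mem_coeIdeal _ |>.mpr ⟨j, Ideal.subset_span (by simp), rfl⟩)
  have hkI : f k ∈ ((I : FractionalIdeal (nonZeroDivisors R) K) : Submodule R K) :=
    FractionalIdeal.mem_coe.mpr (FractionalIdeal.mem_coeIdeal _ |>.mpr ⟨k, Ideal.subset_span (by simp), rfl⟩)
  have key : ∀ z ∈ ((I : FractionalIdeal (nonZeroDivisors R) K) : Submodule R K), ∀ w ∈ B,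
      ∃ r : R, f r = z * w := by
    intro z hz w hw
    have : z * w ∈ ((I : FractionalIdeal (nonZeroDivisors R) K) : Submodule R K) * B :=
      Submodule.mul_mem_mul hz hw
    rw [← FractionalIdeal.coe_mul, hmul] at this
    have := FractionalIdeal.mem_coe.mp this
    exact FractionalIdeal.mem_one_iff _ |>.mp this
  obtain ⟨r, hr⟩ := key _ hjI P hPB
  obtain ⟨s, hs⟩ := key _ hkI P hPB
  obtain ⟨t, ht⟩ := key _ hjI Q hQB
  obtain ⟨u, hu⟩ := key _ hkI Q hQB
  have inj := IsFractionRing.injective R K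
  refine ⟨r, s, t, u, ?_, ?_, ?_⟩
  · apply inj; rw [map_add, map_one, hr, hu, hPQ]
  · apply inj; rw [map_mul, map_mul, hr, hs]; ring
  · apply inj; rw [map_mul, map_mul, hu, ht]; ring
lemma key_mul
    (h3 : ∀ I J K : Ideal R, I ≠ ⊥ → J ≠ ⊥ → K ≠ ⊥ → I ⊓ (J + K) = I ⊓ J + I ⊓ K)
    (a : R) (ha : a ≠ 0) (J : Ideal R) (hJ : J ≠ ⊥) :
    (Ideal.span {a} + J) * (Ideal.span {a} ⊓ J) = Ideal.span {a} * J := by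
  apply le_antisymm
  · rw [Ideal.mul_le]
    intro x hx y hy
    rw [Ideal.add_eq_sup, Submodule.mem_sup] at hx
    obtain ⟨u, hu, v, hv, rfl⟩ := hx
    have h1 : u * y ∈ Ideal.span {a} * J :=
      Ideal.mul_mem_mul hu (Submodule.mem_inf.mp hy).2
    have h2 : v * y ∈ Ideal.span {a} * J := by
      have := Ideal.mul_mem_mul (Submodule.mem_inf.mp hy).1 hv
      simpa [mul_comm] using this
    rw [add_mul]; exact Ideal.add_mem _ h1 h2
  · rw [Ideal.mul_le]
    intro x hx y hy
    obtain ⟨c, rfl⟩ := Ideal.mem_span_singleton'.mp hx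
    have key : a * y ∈ (Ideal.span {a} + J) * (Ideal.span {a} ⊓ J) := by
      by_cases hy0 : y = 0
      · simp [hy0]
      by_cases hay : a + y = 0
      · have hyy : y ∈ Ideal.span {a} := Ideal.mem_span_singleton'.mpr ⟨-1, by linear_combination -hay⟩
        exact Ideal.mul_mem_mul
          (Ideal.add_eq_sup (I := Ideal.span {a}) (J := J) ▸ le_sup_left (a := Ideal.span {a}) (b := J) (Ideal.mem_span_singleton_self a))
          (Submodule.mem_inf.mpr ⟨hyy, hy⟩)
      · have hspan : ∀ z : R, z ≠ 0 → (Ideal.span {z} : Ideal R) ≠ ⊥ := fun z hz =>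
          by simpa [Ideal.span_singleton_eq_bot] using hz
        have hd := h3 (Ideal.span {a}) (Ideal.span {y}) (Ideal.span {a + y})
          (hspan a ha) (hspan y hy0) (hspan _ hay)
        have haLHS : a ∈ Ideal.span {a} ⊓ (Ideal.span {y} + Ideal.span {a + y}) := by
          refine Submodule.mem_inf.mpr ⟨Ideal.mem_span_singleton_self a, ?_⟩
          rw [Ideal.add_eq_sup, Submodule.mem_sup]
          exact ⟨-y, Ideal.mem_span_singleton'.mpr ⟨-1, by ring⟩,
            a + y, Ideal.mem_span_singleton_self _, by ring⟩
        rw [hd, Ideal.add_eq_sup, Submodule.mem_sup] at haLHS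
        obtain ⟨m, hm, n, hn, hmn⟩ := haLHS
        have hm1 := Submodule.mem_inf.mp hm
        have hn1 := Submodule.mem_inf.mp hn
        obtain ⟨c₂, hc₂⟩ := Ideal.mem_span_singleton'.mp hn1.2
        -- a * y = m * y + n * y ; n * y = (a+y) * (c₂ * y)
        have hmy : m * y ∈ (Ideal.span {a} + J) * (Ideal.span {a} ⊓ J) := by
          rw [mul_comm m y]
          refine Ideal.mul_mem_mul ?_ ?_
          · rw [Ideal.add_eq_sup]; exact le_sup_right (a := Ideal.span {a}) hy
          · refine Submodule.mem_inf.mpr ⟨hm1.1, ?_⟩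
            obtain ⟨d, hd'⟩ := Ideal.mem_span_singleton'.mp hm1.2
            exact hd' ▸ J.mul_mem_left d hy
        have hcy : c₂ * y ∈ Ideal.span {a} ⊓ J := by
          refine Submodule.mem_inf.mpr ⟨?_, J.mul_mem_left c₂ hy⟩
          -- n = c₂ * (a + y) ∈ span{a}, so c₂*y = n - c₂*a ∈ span{a}
          have : c₂ * y = n - c₂ * a := by rw [← hc₂]; ring
          rw [this]
          exact Submodule.sub_mem _ hn1.1 (Ideal.mem_span_singleton'.mpr ⟨c₂, rfl⟩)
        have hny : n * y ∈ (Ideal.span {a} + J) * (Ideal.span {a} ⊓ J) := by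
          have hne : n * y = (a + y) * (c₂ * y) := by rw [← hc₂]; ring
          rw [hne]
          refine Ideal.mul_mem_mul ?_ hcy
          rw [Ideal.add_eq_sup]
          exact Submodule.add_mem _ (le_sup_left (a := Ideal.span {a}) (Ideal.mem_span_singleton_self a)) (le_sup_right (a := Ideal.span {a}) hy)
        have : a * y = m * y + n * y := by rw [← hmn]; ring
        rw [this]; exact Submodule.add_mem _ hmy hny
    have : c * a * y = c * (a * y) := by ring
    rw [this]
    exact Ideal.mul_mem_left _ c key

lemma unit_of_span_finset
    (h3 : ∀ I J K : Ideal R, I ≠ ⊥ → J ≠ ⊥ → K ≠ ⊥ → I ⊓ (J + K) = I ⊓ J + I ⊓ K)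
    (s : Finset R) (hs : Ideal.span (s : Set R) ≠ ⊥) :
    IsUnit ((Ideal.span (s : Set R) : Ideal R) :
      FractionalIdeal (nonZeroDivisors R) (FractionRing R)) := by
  classical
  induction s using Finset.induction_on with
  | empty => simp at hs
  | @insert a s ha ih =>
    rw [Finset.coe_insert, Ideal.span_insert] at hs ⊢
    by_cases hsb : Ideal.span (s : Set R) = ⊥
    · rw [hsb, sup_bot_eq] at hs ⊢
      have ha0 : a ≠ 0 := fun h => hs (by simp [h])
      exact unit_singleton a ha0
    · have ihs := ih hsb
      by_cases ha0 : a = 0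
      · rw [ha0]; simpa using ihs
      · have hkey := key_mul h3 a ha0 (Ideal.span (s : Set R)) hsb
        rw [Ideal.add_eq_sup] at hkey
        have hcoe : ((Ideal.span {a} ⊔ Ideal.span (s : Set R) : Ideal R) :
              FractionalIdeal (nonZeroDivisors R) (FractionRing R)) *
            ((Ideal.span {a} ⊓ Ideal.span (s : Set R) : Ideal R) :
              FractionalIdeal (nonZeroDivisors R) (FractionRing R)) =
            ((Ideal.span {a} : Ideal R) : FractionalIdeal (nonZeroDivisors R) (FractionRing R)) *
            ((Ideal.span (s : Set R) : Ideal R) :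
              FractionalIdeal (nonZeroDivisors R) (FractionRing R)) := by
          rw [← FractionalIdeal.coeIdeal_mul, ← FractionalIdeal.coeIdeal_mul, hkey]
        have hunit : IsUnit (((Ideal.span {a} : Ideal R) :
              FractionalIdeal (nonZeroDivisors R) (FractionRing R)) *
            ((Ideal.span (s : Set R) : Ideal R) :
              FractionalIdeal (nonZeroDivisors R) (FractionRing R))) :=
          (unit_singleton a ha0).mul ihs
        rw [← hcoe] at hunit
        exact isUnit_of_mul_isUnit_left hunit

end PruferAux

theorem prufer_tfae (R : Type*) [CommRing R] [IsDomain R] :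
    List.TFAE
      [IsPruferDomain R,
       ∀ I J K : Ideal R, I ≠ ⊥ → J ≠ ⊥ → K ≠ ⊥ → I + J ⊓ K = (I + J) ⊓ (I + K),
       ∀ I J K : Ideal R, I ≠ ⊥ → J ≠ ⊥ → K ≠ ⊥ → I ⊓ (J + K) = I ⊓ J + I ⊓ K] := by
  tfae_have 1 → 2 := by
    intro hP I J K _ _ _
    apply le_antisymm
    · simp only [Ideal.add_eq_sup]
      exact sup_le (le_inf le_sup_left le_sup_left)
        (le_inf (le_sup_of_le_right inf_le_left) (le_sup_of_le_right inf_le_right))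
    · intro x hx
      rw [Submodule.mem_inf, Ideal.add_eq_sup, Ideal.add_eq_sup, Submodule.mem_sup,
        Submodule.mem_sup] at hx
      obtain ⟨⟨i₁, hi₁, j, hj, hx1⟩, ⟨i₂, hi₂, k, hk, hx2⟩⟩ := hx
      obtain ⟨r, s, t, u, hru, hrs, htu⟩ := prufer_char hP j k
      have hjk : j - k ∈ I := by
        have : j - k = i₂ - i₁ := by linear_combination hx1 - hx2
        rw [this]; exact I.sub_mem hi₂ hi₁
      rw [Ideal.add_eq_sup, Submodule.mem_sup]
      refine ⟨i₁ + r * (j - k), I.add_mem hi₁ (I.mul_mem_left r hjk),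
        r * k + u * j, ?_, by linear_combination hx1 + j * hru⟩
      refine Submodule.add_mem _ (Submodule.mem_inf.mpr ⟨?_, K.mul_mem_left r hk⟩)
        (Submodule.mem_inf.mpr ⟨J.mul_mem_left u hj, ?_⟩)
      · rw [hrs]; exact J.mul_mem_left s hj
      · rw [htu]; exact K.mul_mem_left t hk
  tfae_have 2 → 3 := by
    intro h2 I J K hI hJ hK
    simp only [Ideal.add_eq_sup] at h2 ⊢
    have e1 := h2 (I ⊓ J) I K (inf_ne_bot' hI hJ) hI hK
    have e2 := h2 K I J hK hI hJ
    calc I ⊓ (J ⊔ K) = I ⊓ ((I ⊔ K) ⊓ (J ⊔ K)) := by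
            rw [← inf_assoc, inf_eq_left.mpr (le_sup_left : I ≤ I ⊔ K)]
      _ = I ⊓ ((K ⊔ I) ⊓ (K ⊔ J)) := by rw [sup_comm I K, sup_comm J K]
      _ = I ⊓ (K ⊔ I ⊓ J) := by rw [← e2]
      _ = I ⊓ (I ⊓ J ⊔ K) := by rw [sup_comm]
      _ = (I ⊓ J ⊔ I) ⊓ (I ⊓ J ⊔ K) := by
            rw [sup_eq_right.mpr (inf_le_left : I ⊓ J ≤ I)]
      _ = I ⊓ J ⊔ I ⊓ K := (e1).symm
  tfae_have 3 → 1 := by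
    intro h3 I hI hfg
    obtain ⟨s, rfl⟩ := hfg
    exact unit_of_span_finset h3 s hI
  tfae_finish
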